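/- Every finite simple graph G = (V,E) with maximum degree at most 3 admits a partition of its edge set into two linear forests, i.e., E = L₁ ⊍ L₂ where each Lᵢ is a linear forest. -/

import Mathlib

set_option linter.unusedSectionVars false
set_option maxHeartbeats 1000000

open SimpleGraph

section AuxLinearArboricity



variable {V : Type*} [DecidableEq V]

/-- The graph spanned by a finite set of edges. -/
abbrev grph (S : Finset (Sym2 V)) : SimpleGraph V := SimpleGraph.fromEdgeSet (↑S)

/-- Number of edges of `S` incident to `v`. -/
def cnt (S : Finset (Sym2 V)) (v : V) : ℕ := (S.filter (fun e => v ∈ e)).card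

lemma grph_adj {S : Finset (Sym2 V)} {u w : V} :
    (grph S).Adj u w ↔ s(u, w) ∈ S ∧ u ≠ w := by
  simp [SimpleGraph.fromEdgeSet_adj]

lemma mem_of_walk_edge {S : Finset (Sym2 V)} {x y : V} {w : (grph S).Walk x y}
    {e : Sym2 V} (he : e ∈ w.edges) : e ∈ S := by
  have := w.edges_subset_edgeSet he
  rw [SimpleGraph.edgeSet_fromEdgeSet] at this
  exact_mod_cast this.1

lemma cnt_le_of_subset {S T : Finset (Sym2 V)} (h : S ⊆ T) (v : V) : cnt S v ≤ cnt T v :=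
  Finset.card_le_card (Finset.filter_subset_filter _ h)

lemma cnt_union_of_disjoint {S T : Finset (Sym2 V)} (h : Disjoint S T) (v : V) :
    cnt (S ∪ T) v = cnt S v + cnt T v := by
  rw [cnt, cnt, cnt, Finset.filter_union]
  exact Finset.card_union_of_disjoint (Finset.disjoint_filter_filter h)

lemma cnt_insert {S : Finset (Sym2 V)} {e : Sym2 V} (he : e ∉ S) (v : V) :
    cnt (insert e S) v = cnt S v + (if v ∈ e then 1 else 0) := by
  rw [cnt, cnt, Finset.filter_insert]
  split
  · rw [Finset.card_insert_of_notMem (fun hc => he (Finset.mem_filter.1 hc).1)]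
  · simp

lemma cnt_erase_add_one_le {S : Finset (Sym2 V)} {e : Sym2 V} {v : V}
    (he : e ∈ S) (hv : v ∈ e) : cnt (S.erase e) v + 1 ≤ cnt S v := by
  have h1 : (S.erase e).filter (fun e => v ∈ e) ⊆ (S.filter (fun e => v ∈ e)).erase e := by
    intro x hx
    rw [Finset.mem_filter, Finset.mem_erase] at hx
    rw [Finset.mem_erase, Finset.mem_filter]
    exact ⟨hx.1.1, hx.1.2, hx.2⟩
  have h2 := Finset.card_le_card h1
  rw [Finset.card_erase_of_mem (Finset.mem_filter.2 ⟨he, hv⟩)] at h2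
  have h3 : 1 ≤ (S.filter (fun e => v ∈ e)).card :=
    Finset.card_pos.2 ⟨e, Finset.mem_filter.2 ⟨he, hv⟩⟩
  unfold cnt
  omega

lemma cnt_eq_zero_of_no_incident {S : Finset (Sym2 V)} {v : V}
    (h : ∀ e ∈ S, v ∉ e) : cnt S v = 0 := by
  rw [cnt, Finset.card_eq_zero, Finset.filter_eq_empty_iff]
  exact h

lemma two_le_cnt_of_two_edges {S : Finset (Sym2 V)} {v : V} {e1 e2 : Sym2 V}
    (h1 : e1 ∈ S) (h2 : e2 ∈ S) (hv1 : v ∈ e1) (hv2 : v ∈ e2) (hne : e1 ≠ e2) :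
    2 ≤ cnt S v := by
  have hsub : ({e1, e2} : Finset (Sym2 V)) ⊆ S.filter (fun e => v ∈ e) := by
    intro x hx
    rcases Finset.mem_insert.1 hx with rfl | hx
    · exact Finset.mem_filter.2 ⟨h1, hv1⟩
    · rw [Finset.mem_singleton] at hx; subst hx
      exact Finset.mem_filter.2 ⟨h2, hv2⟩
  have := Finset.card_le_card hsub
  rwa [Finset.card_pair hne] at this

lemma three_le_cnt_of_three_edges {S : Finset (Sym2 V)} {v : V} {e1 e2 e3 : Sym2 V}
    (h1 : e1 ∈ S) (h2 : e2 ∈ S) (h3 : e3 ∈ S) (hv1 : v ∈ e1) (hv2 : v ∈ e2) (hv3 : v ∈ e3)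
    (h12 : e1 ≠ e2) (h13 : e1 ≠ e3) (h23 : e2 ≠ e3) : 3 ≤ cnt S v := by
  have hsub : ({e1, e2, e3} : Finset (Sym2 V)) ⊆ S.filter (fun e => v ∈ e) := by
    intro x hx
    simp only [Finset.mem_insert, Finset.mem_singleton] at hx
    rcases hx with rfl | rfl | rfl
    · exact Finset.mem_filter.2 ⟨h1, hv1⟩
    · exact Finset.mem_filter.2 ⟨h2, hv2⟩
    · exact Finset.mem_filter.2 ⟨h3, hv3⟩
  have hcard := Finset.card_le_card hsub
  have h3' : ({e1, e2, e3} : Finset (Sym2 V)).card = 3 := by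
    rw [Finset.card_insert_of_notMem (by simp [h12, h13]),
        Finset.card_insert_of_notMem (by simp [h23]), Finset.card_singleton]
  unfold cnt
  omega

/-- In a path, any two edges containing the start vertex are equal. -/
lemma start_edge_unique {H : SimpleGraph V} : ∀ {x y : V} {p : H.Walk x y}, p.IsPath →
    ∀ e1 ∈ p.edges, ∀ e2 ∈ p.edges, x ∈ e1 → x ∈ e2 → e1 = e2 := by
  intro x y p
  induction p with
  | nil => intro _ e1 h1; simp at h1
  | @cons a b c h q ih =>
    intro hp e1 h1 e2 h2 hx1 hx2
    rw [SimpleGraph.Walk.cons_isPath_iff] at hp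
    have key : ∀ e ∈ (SimpleGraph.Walk.cons h q).edges, a ∈ e → e = s(a, b) := by
      intro e hee hxe
      rw [SimpleGraph.Walk.edges_cons, List.mem_cons] at hee
      rcases hee with rfl | hee
      · rfl
      · exfalso
        obtain ⟨x1, x2⟩ := e
        rw [Sym2.mem_iff] at hxe
        rcases hxe with rfl | rfl
        · exact hp.2 (q.fst_mem_support_of_mem_edges hee)
        · exact hp.2 (q.snd_mem_support_of_mem_edges hee)
    rw [key e1 h1 hx1, key e2 h2 hx2]
variable {V : Type*} [DecidableEq V]

lemma cycle_start_two_edges {H : SimpleGraph V} {v : V} {c : H.Walk v v} (hc : c.IsCycle) :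
    ∃ e1 e2 : Sym2 V, e1 ≠ e2 ∧ e1 ∈ c.edges ∧ e2 ∈ c.edges ∧ v ∈ e1 ∧ v ∈ e2 := by
  have hlen := hc.three_le_length
  obtain ⟨b, hadj, q, rfl⟩ := SimpleGraph.Walk.not_nil_iff.mp hc.not_nil
  have hrevnil : ¬ (SimpleGraph.Walk.cons hadj q).reverse.Nil := by
    rw [SimpleGraph.Walk.nil_iff_length_eq, SimpleGraph.Walk.length_reverse]
    simp [SimpleGraph.Walk.length_cons]
  obtain ⟨b2, hadj2, hq2⟩ := SimpleGraph.Walk.not_nil_iff.mp hrevnil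
  obtain ⟨q2, hq2eq⟩ := hq2
  refine ⟨s(v, b), s(v, b2), ?_, ?_, ?_, ?_, ?_⟩
  · -- distinctness
    intro heq
    have hedges : (SimpleGraph.Walk.cons hadj q).edges = s(v, b) :: q.edges :=
      SimpleGraph.Walk.edges_cons _ _
    have hrevedges : (SimpleGraph.Walk.cons hadj q).reverse.edges
        = s(v, b2) :: q2.edges := by rw [hq2eq]; exact SimpleGraph.Walk.edges_cons _ _
    rw [SimpleGraph.Walk.edges_reverse] at hrevedges
    -- c.edges.reverse = s(v,b2) :: q2.edges
    have hEq : (SimpleGraph.Walk.cons hadj q).edges = q2.edges.reverse ++ [s(v, b2)] := by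
      have := congrArg List.reverse hrevedges
      rwa [List.reverse_reverse, List.reverse_cons] at this
    rw [hedges, ← heq] at hEq
    have hqne : q.edges ≠ [] := by
      intro h0
      have hq0 : q.length = 0 := by simpa using congrArg List.length h0
      rw [SimpleGraph.Walk.length_cons, hq0] at hlen
      omega
    have hnodup : (s(v, b) :: q.edges).Nodup := by
      have := hc.isTrail.edges_nodup
      rwa [hedges] at this
    rcases hrl : q2.edges.reverse with _ | ⟨z, zs⟩
    · rw [hrl] at hEq
      simp only [List.nil_append] at hEq
      exact hqne (List.cons_eq_cons.mp hEq).2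
    · rw [hrl] at hEq
      simp only [List.cons_append] at hEq
      have htail : q.edges = zs ++ [s(v, b)] := (List.cons_eq_cons.mp hEq).2
      have : s(v, b) ∈ q.edges := by rw [htail]; simp
      exact (List.nodup_cons.mp hnodup).1 this
  · simp [SimpleGraph.Walk.edges_cons]
  · have : s(v, b2) ∈ (SimpleGraph.Walk.cons hadj q).reverse.edges := by
      rw [hq2eq]; simp [SimpleGraph.Walk.edges_cons]
    rwa [SimpleGraph.Walk.edges_reverse, List.mem_reverse] at this
  · simp
  · simp

/-- Every support vertex of a cycle has two distinct incident cycle edges. -/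
lemma cycle_two_edges {H : SimpleGraph V} {v u : V} {c : H.Walk v v} (hc : c.IsCycle)
    (hu : u ∈ c.support) :
    ∃ e1 e2 : Sym2 V, e1 ≠ e2 ∧ e1 ∈ c.edges ∧ e2 ∈ c.edges ∧ u ∈ e1 ∧ u ∈ e2 := by
  obtain ⟨e1, e2, hne, h1, h2, hv1, hv2⟩ := cycle_start_two_edges (hc.rotate hu)
  exact ⟨e1, e2, hne, (c.rotate_edges u hu).mem_iff.mp h1,
    (c.rotate_edges u hu).mem_iff.mp h2, hv1, hv2⟩

/-- Walks starting in a set closed under adjacency stay in the set. -/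
lemma walk_support_subset_closed {H : SimpleGraph V} (S : Set V)
    (hS : ∀ u ∈ S, ∀ w, H.Adj u w → w ∈ S) :
    ∀ {x t : V} (q : H.Walk x t), x ∈ S → ∀ u ∈ q.support, u ∈ S := by
  intro x t q
  induction q with
  | nil => intro hx u hu; rw [SimpleGraph.Walk.support_nil, List.mem_singleton] at hu
           subst hu; exact hx
  | @cons a b c h q ih =>
    intro hx u hu
    rw [SimpleGraph.Walk.support_cons, List.mem_cons] at hu
    rcases hu with rfl | hu
    · exact hx
    · exact ih (hS a hx b h) u hu
variable {V : Type*} [DecidableEq V]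

/-- An interior vertex of a path has two distinct neighbors on the path. -/
lemma path_interior_two_neighbors {H : SimpleGraph V} {x y z : V} {p : H.Walk x y}
    (hp : p.IsPath) (hz : z ∈ p.support) (hzx : z ≠ x) (hzy : z ≠ y) :
    ∃ a b : V, a ≠ b ∧ H.Adj z a ∧ H.Adj z b ∧ a ∈ p.support ∧ b ∈ p.support := by
  have hspec := p.take_spec hz
  set t1 := p.takeUntil z hz with ht1
  set t2 := p.dropUntil z hz with ht2
  have ht1p : t1.IsPath := hp.takeUntil hz
  have ht2p : t2.IsPath := hp.dropUntil hz
  -- neighbor from t1 (via reverse)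
  have ht1nil : ¬ t1.reverse.Nil := by
    rw [SimpleGraph.Walk.nil_iff_length_eq, SimpleGraph.Walk.length_reverse]
    intro h0
    exact hzx (SimpleGraph.Walk.eq_of_length_eq_zero h0).symm
  obtain ⟨a, haadj, q1, hq1⟩ := SimpleGraph.Walk.not_nil_iff.mp ht1nil
  have ha_t1 : a ∈ t1.support := by
    have : a ∈ t1.reverse.support := by
      rw [hq1, SimpleGraph.Walk.support_cons]
      exact List.mem_cons_of_mem _ q1.start_mem_support
    rwa [SimpleGraph.Walk.support_reverse, List.mem_reverse] at this
  have ht2nil : ¬ t2.Nil := by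
    intro h0
    exact hzy h0.eq
  obtain ⟨b, hbadj, q2, hq2⟩ := SimpleGraph.Walk.not_nil_iff.mp ht2nil
  have hb_t2tail : b ∈ t2.support.tail := by
    rw [hq2, SimpleGraph.Walk.support_cons]
    exact q2.start_mem_support
  have hnd : (t1.support ++ t2.support.tail).Nodup := by
    have := hp.support_nodup
    rwa [← hspec, SimpleGraph.Walk.support_append] at this
  have hab : a ≠ b := fun h =>
    (List.disjoint_of_nodup_append hnd) ha_t1 (h ▸ hb_t2tail)
  refine ⟨a, b, hab, haadj, hbadj, ?_, ?_⟩
  · exact (SimpleGraph.Walk.support_takeUntil_subset p hz) ha_t1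
  · exact (SimpleGraph.Walk.support_dropUntil_subset p hz) (List.mem_of_mem_tail hb_t2tail)

/-- Closure: the support of a path between two vertices of count ≤ 1 in a graph of
max count 2 is closed under adjacency. -/
lemma path_support_closed {B : Finset (Sym2 V)} (hdeg : ∀ v, cnt B v ≤ 2)
    {x y : V} {p : (grph B).Walk x y} (hp : p.IsPath) (hxy : x ≠ y)
    (hx : cnt B x ≤ 1) (hy : cnt B y ≤ 1) :
    ∀ u ∈ p.support, ∀ w, (grph B).Adj u w → w ∈ p.support := by
  have key : ∀ {x' y' : V} (p' : (grph B).Walk x' y'), p'.IsPath → x' ≠ y' →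
      cnt B x' ≤ 1 → ∀ w, (grph B).Adj x' w → w ∈ p'.support := by
    intro x' y' p' hp' hne hx' w hadj
    have hnil : ¬ p'.Nil := SimpleGraph.Walk.not_nil_of_ne hne
    obtain ⟨a, haadj, q, hq⟩ := SimpleGraph.Walk.not_nil_iff.mp hnil
    by_cases hwa : w = a
    · subst hwa
      rw [hq, SimpleGraph.Walk.support_cons]
      exact List.mem_cons_of_mem _ q.start_mem_support
    · exfalso
      have h1 : s(x', w) ∈ B := (grph_adj.mp hadj).1
      have h2 : s(x', a) ∈ B := (grph_adj.mp haadj).1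
      have : (2 : ℕ) ≤ cnt B x' :=
        two_le_cnt_of_two_edges h1 h2 (Sym2.mem_mk_left _ _) (Sym2.mem_mk_left _ _)
          (fun h => hwa (Sym2.congr_right.mp h))
      omega
  intro u hu w hadj
  by_cases hux : u = x
  · subst hux
    exact key p hp hxy hx w hadj
  by_cases huy : u = y
  · subst huy
    have := key p.reverse hp.reverse (Ne.symm hxy) hy w hadj
    rwa [SimpleGraph.Walk.support_reverse, List.mem_reverse] at this
  · obtain ⟨a, b, hab, ha, hb, has, hbs⟩ := path_interior_two_neighbors hp hu hux huy
    by_cases hw : w = a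
    · subst hw; exact has
    by_cases hw' : w = b
    · subst hw'; exact hbs
    · exfalso
      have h1 : s(u, a) ∈ B := (grph_adj.mp ha).1
      have h2 : s(u, b) ∈ B := (grph_adj.mp hb).1
      have h3 : s(u, w) ∈ B := (grph_adj.mp hadj).1
      have : (3 : ℕ) ≤ cnt B u :=
        three_le_cnt_of_three_edges h1 h2 h3 (Sym2.mem_mk_left _ _) (Sym2.mem_mk_left _ _)
          (Sym2.mem_mk_left _ _)
          (fun h => hab (Sym2.congr_right.mp h))
          (fun h => hw ((Sym2.congr_right.mp h).symm))
          (fun h => hw' ((Sym2.congr_right.mp h).symm))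
      have := hdeg u
      omega

/-- Three distinct pairwise-reachable vertices of incidence count ≤ 1 in a graph of
max incidence count ≤ 2 : impossible. -/
lemma trio_impossible {B : Finset (Sym2 V)} (hdeg : ∀ v, cnt B v ≤ 2)
    {x y z : V} (hxy : x ≠ y) (hxz : x ≠ z) (hyz : y ≠ z)
    (hx : cnt B x ≤ 1) (hy : cnt B y ≤ 1) (hz : cnt B z ≤ 1)
    (hrxy : (grph B).Reachable x y) (hrxz : (grph B).Reachable x z) : False := by
  obtain ⟨w⟩ := hrxy
  have hp : (w.toPath : (grph B).Walk x y).IsPath := w.toPath.2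
  set p := (w.toPath : (grph B).Walk x y) with hpdef
  have hclosed := path_support_closed hdeg hp hxy hx hy
  obtain ⟨q⟩ := hrxz
  have hzsup : z ∈ p.support := by
    have := walk_support_subset_closed (S := {v | v ∈ p.support})
      (fun u hu w' hw' => hclosed u hu w' hw') q p.start_mem_support z q.end_mem_support
    exact this
  obtain ⟨a, b, hab, ha, hb, _, _⟩ := path_interior_two_neighbors hp hzsup hxz.symm hyz.symm
  have h1 : s(z, a) ∈ B := (grph_adj.mp ha).1
  have h2 : s(z, b) ∈ B := (grph_adj.mp hb).1
  have : (2 : ℕ) ≤ cnt B z :=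
    two_le_cnt_of_two_edges h1 h2 (Sym2.mem_mk_left _ _) (Sym2.mem_mk_left _ _)
      (fun h => hab (Sym2.congr_right.mp h))
  omega
open scoped Classical

/-- Number of edges of `S` lying on some cycle of the graph spanned by `S`. -/
noncomputable def phi (S : Finset (Sym2 V)) : ℕ :=
  (S.filter (fun e => ∃ x : V, ∃ w : (grph S).Walk x x, w.IsCycle ∧ e ∈ w.edges)).card

lemma reach_along_walk {H K : SimpleGraph V} :
    ∀ {x y : V} (w : H.Walk x y), (∀ a b : V, s(a, b) ∈ w.edges → K.Reachable a b) →
    ∀ t ∈ w.support, K.Reachable x t := by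
  intro x y w
  induction w with
  | nil =>
    intro _ t ht
    rw [SimpleGraph.Walk.support_nil, List.mem_singleton] at ht
    subst ht; rfl
  | @cons a b c h q ih =>
    intro hre t ht
    rw [SimpleGraph.Walk.support_cons, List.mem_cons] at ht
    rcases ht with rfl | ht
    · rfl
    · have hab : K.Reachable a b := hre a b (by simp [SimpleGraph.Walk.edges_cons])
      have := ih (fun a' b' he => hre a' b' (by simp [SimpleGraph.Walk.edges_cons, he])) t ht
      exact hab.trans this

lemma acyclic_of_phi_eq_zero {S : Finset (Sym2 V)} (h : phi S = 0) :
    (grph S).IsAcyclic := by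
  intro x w hw
  have hlen := hw.three_le_length
  have hne : w.edges ≠ [] := by
    intro h0
    have hl := w.length_edges
    rw [h0] at hl
    simp at hl
    omega
  obtain ⟨e, he⟩ := List.exists_mem_of_ne_nil _ hne
  have heS : e ∈ S := mem_of_walk_edge he
  have : e ∈ S.filter (fun e => ∃ x : V, ∃ w : (grph S).Walk x x, w.IsCycle ∧ e ∈ w.edges) := by
    rw [Finset.mem_filter]
    exact ⟨heS, x, w, hw, he⟩
  rw [phi, Finset.card_eq_zero] at h
  rw [h] at this
  exact absurd this (Finset.notMem_empty e)

/-- Cycle transfer between spanned graphs. -/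
lemma cycle_transfer {S T : Finset (Sym2 V)} {x : V} {w : (grph S).Walk x x}
    (hw : w.IsCycle) (hsub : ∀ e ∈ w.edges, e ∈ T) (hdiag : ∀ e ∈ T, ¬ e.IsDiag) :
    ∃ w' : (grph T).Walk x x, w'.IsCycle ∧ w'.edges = w.edges := by
  have hedges : ∀ e ∈ w.edges, e ∈ (grph T).edgeSet := by
    intro e he
    rw [SimpleGraph.edgeSet_fromEdgeSet]
    exact ⟨by exact_mod_cast hsub e he, hdiag e (hsub e he)⟩
  exact ⟨w.transfer (grph T) hedges, hw.transfer hedges, w.edges_transfer hedges⟩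

lemma stage2_step {A B : Finset (Sym2 V)} (hd : Disjoint A B)
    (hdiag : ∀ e ∈ A ∪ B, ¬ e.IsDiag) (h3 : ∀ v, cnt (A ∪ B) v ≤ 3)
    (hA : ∀ v, cnt A v ≤ 2) (hB : ∀ v, cnt B v ≤ 2)
    (hcyc : ¬ (grph A).IsAcyclic) :
    ∃ A' B' : Finset (Sym2 V), Disjoint A' B' ∧ A' ∪ B' = A ∪ B ∧
      (∀ v, cnt A' v ≤ 2) ∧ (∀ v, cnt B' v ≤ 2) ∧ phi A' + phi B' < phi A + phi B := by
  rw [SimpleGraph.isAcyclic_iff_forall_adj_isBridge] at hcyc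
  push_neg at hcyc
  obtain ⟨x0, y0, hadj0, hnb⟩ := hcyc
  rw [SimpleGraph.isBridge_iff_adj_and_forall_cycle_notMem hadj0] at hnb
  push_neg at hnb
  obtain ⟨z0, c, hc, hec⟩ := hnb
  -- every support vertex of `c` has cnt A ≥ 2 hence cnt B ≤ 1
  have hsupA : ∀ u ∈ c.support, 2 ≤ cnt A u := by
    intro u hu
    obtain ⟨e1, e2, hne, h1, h2, hv1, hv2⟩ := cycle_two_edges hc hu
    exact two_le_cnt_of_two_edges (mem_of_walk_edge h1) (mem_of_walk_edge h2) hv1 hv2 hne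
  have hsupB : ∀ u ∈ c.support, cnt B u ≤ 1 := by
    intro u hu
    have := h3 u
    rw [cnt_union_of_disjoint hd] at this
    have := hsupA u hu
    omega
  -- find an edge of `c` whose endpoints are not reachable in `grph B`
  have hexists : ∃ u v : V, s(u, v) ∈ c.edges ∧ ¬ (grph B).Reachable u v := by
    by_contra hre
    push_neg at hre
    have hreach : ∀ t ∈ c.support, (grph B).Reachable z0 t :=
      reach_along_walk c (fun a b he => hre a b he)
    -- find three distinct support vertices
    have hlen := hc.three_le_length
    have htndup := hc.support_nodup
    have htlen : c.support.tail.length = c.length := by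
      have h1 := c.length_support
      have h2 : c.support.tail.length = c.support.length - 1 := List.length_tail
      omega
    obtain ⟨t0, l0, hl0⟩ := List.exists_cons_of_ne_nil (l := c.support.tail) (by
      intro h0; rw [h0] at htlen; simp at htlen; omega)
    obtain ⟨t1, l1, hl1⟩ := List.exists_cons_of_ne_nil (l := l0) (by
      intro h0; rw [h0] at hl0; have := congrArg List.length hl0
      rw [htlen] at this; simp at this; omega)
    obtain ⟨t2, l2, hl2⟩ := List.exists_cons_of_ne_nil (l := l1) (by
      intro h0; rw [h0] at hl1; rw [hl1] at hl0
      have := congrArg List.length hl0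
      rw [htlen] at this; simp at this; omega)
    rw [hl2] at hl1; rw [hl1] at hl0
    rw [hl0] at htndup
    have h01 : t0 ≠ t1 := by
      rcases List.nodup_cons.mp htndup with ⟨hn, _⟩
      intro h; exact hn (h ▸ List.mem_cons_self)
    have h02 : t0 ≠ t2 := by
      rcases List.nodup_cons.mp htndup with ⟨hn, _⟩
      intro h; exact hn (h ▸ List.mem_cons_of_mem _ (List.mem_cons_self))
    have h12 : t1 ≠ t2 := by
      rcases List.nodup_cons.mp htndup with ⟨_, hn2⟩
      rcases List.nodup_cons.mp hn2 with ⟨hn, _⟩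
      intro h; exact hn (h ▸ List.mem_cons_self)
    have hmem : ∀ s ∈ c.support.tail, s ∈ c.support := fun s hs => List.mem_of_mem_tail hs
    have ht0 : t0 ∈ c.support := hmem t0 (by rw [hl0]; simp)
    have ht1 : t1 ∈ c.support := hmem t1 (by rw [hl0]; simp)
    have ht2 : t2 ∈ c.support := hmem t2 (by rw [hl0]; simp)
    exact trio_impossible hB h01 h02 h12 (hsupB t0 ht0) (hsupB t1 ht1) (hsupB t2 ht2)
      ((hreach t0 ht0).symm.trans (hreach t1 ht1))
      ((hreach t0 ht0).symm.trans (hreach t2 ht2))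
  obtain ⟨u, v, huv, hnr⟩ := hexists
  set e : Sym2 V := s(u, v) with hedef
  have heA : e ∈ A := mem_of_walk_edge huv
  have huv_adj : (grph A).Adj u v := c.adj_of_mem_edges huv
  have hune : u ≠ v := huv_adj.ne
  have heB : e ∉ B := Finset.disjoint_left.mp hd heA
  refine ⟨A.erase e, insert e B, ?_, ?_, ?_, ?_, ?_⟩
  · rw [Finset.disjoint_insert_right]
    exact ⟨Finset.notMem_erase _ _, Finset.disjoint_of_subset_left (Finset.erase_subset _ _) hd⟩
  · ext x
    simp only [Finset.mem_union, Finset.mem_erase, Finset.mem_insert]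
    constructor
    · rintro (⟨_, hx⟩ | (rfl | hx))
      · exact Or.inl hx
      · exact Or.inl heA
      · exact Or.inr hx
    · rintro (hx | hx)
      · by_cases hxe : x = e
        · exact Or.inr (Or.inl hxe)
        · exact Or.inl ⟨hxe, hx⟩
      · exact Or.inr (Or.inr hx)
  · intro w
    exact le_trans (cnt_le_of_subset (Finset.erase_subset _ _) w) (hA w)
  · intro w
    rw [cnt_insert heB]
    split
    · next hw =>
      rw [Sym2.mem_iff] at hw
      have hle1 : cnt B w ≤ 1 := by
        rcases hw with rfl | rfl
        · exact hsupB w (c.fst_mem_support_of_mem_edges huv)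
        · exact hsupB w (c.snd_mem_support_of_mem_edges huv)
      omega
    · have := hB w; omega
  · -- phi decrease
    have hphiA : phi (A.erase e) + 1 ≤ phi A := by
      have hsub : (A.erase e).filter (fun e' => ∃ x : V,
            ∃ w : (grph (A.erase e)).Walk x x, w.IsCycle ∧ e' ∈ w.edges) ⊆
          (A.filter (fun e' => ∃ x : V,
            ∃ w : (grph A).Walk x x, w.IsCycle ∧ e' ∈ w.edges)).erase e := by
        intro x hx
        rw [Finset.mem_filter] at hx
        obtain ⟨hxA, x0', w, hw, hew⟩ := hx
        rw [Finset.mem_erase, Finset.mem_filter]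
        obtain ⟨w', hw', hwe'⟩ := cycle_transfer hw
          (fun e' he' => Finset.erase_subset _ _ (mem_of_walk_edge he'))
          (fun e' he' => by
            have : e' ∈ (A : Set (Sym2 V)) ∪ (B : Set (Sym2 V)) := Or.inl he'
            exact hdiag e' (by simpa using this))
        refine ⟨(Finset.mem_erase.mp hxA).1, (Finset.mem_erase.mp hxA).2, x0', w', hw', ?_⟩
        rw [hwe']; exact hew
      have h2 := Finset.card_le_card hsub
      have heAf : e ∈ A.filter (fun e' => ∃ x : V,
          ∃ w : (grph A).Walk x x, w.IsCycle ∧ e' ∈ w.edges) :=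
        Finset.mem_filter.2 ⟨heA, z0, c, hc, huv⟩
      rw [Finset.card_erase_of_mem heAf] at h2
      have h4 : 1 ≤ (A.filter (fun e' => ∃ x : V,
          ∃ w : (grph A).Walk x x, w.IsCycle ∧ e' ∈ w.edges)).card :=
        Finset.card_pos.2 ⟨e, heAf⟩
      unfold phi
      omega
    have hphiB : phi (insert e B) ≤ phi B := by
      -- `e` is a bridge in `grph (insert e B)`
      have hgr : grph (insert e B) \ SimpleGraph.fromEdgeSet {e} = grph B := by
        ext a b
        rw [SimpleGraph.sdiff_adj]
        constructor
        · rintro ⟨h1, h2⟩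
          rw [grph_adj] at h1
          obtain ⟨hm, hne'⟩ := h1
          rw [grph_adj]
          refine ⟨?_, hne'⟩
          rcases Finset.mem_insert.mp hm with h | h
          · exfalso
            exact h2 ((SimpleGraph.fromEdgeSet_adj _).mpr ⟨by rw [h]; rfl, hne'⟩)
          · exact h
        · intro h1
          rw [grph_adj] at h1
          obtain ⟨hm, hne'⟩ := h1
          refine ⟨grph_adj.mpr ⟨Finset.mem_insert_of_mem hm, hne'⟩, ?_⟩
          intro hc'
          rw [SimpleGraph.fromEdgeSet_adj] at hc'
          have : s(a, b) = e := hc'.1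
          rw [this] at hm
          exact heB hm
      have hbridge : ∀ ⦃z : V⦄ (w : (grph (insert e B)).Walk z z), w.IsCycle → e ∉ w.edges := by
        intro z w hw hew
        have hiff := @SimpleGraph.adj_and_reachable_delete_edges_iff_exists_cycle V
          (grph (insert e B)) u v
        have : (grph (insert e B)).Adj u v ∧
            (grph (insert e B) \ SimpleGraph.fromEdgeSet {s(u, v)}).Reachable u v :=
          hiff.mpr ⟨z, w, hw, hew⟩
        rw [← hedef, hgr] at this
        exact hnr this.2
      have hsub : (insert e B).filter (fun e' => ∃ x : V,
            ∃ w : (grph (insert e B)).Walk x x, w.IsCycle ∧ e' ∈ w.edges) ⊆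
          B.filter (fun e' => ∃ x : V,
            ∃ w : (grph B).Walk x x, w.IsCycle ∧ e' ∈ w.edges) := by
        intro x hx
        rw [Finset.mem_filter] at hx
        obtain ⟨hxB, x0', w, hw, hew⟩ := hx
        have hxe : x ≠ e := by
          intro h; exact hbridge w hw (h ▸ hew)
        have hxB' : x ∈ B := by
          rcases Finset.mem_insert.mp hxB with h | h
          · exact absurd h hxe
          · exact h
        rw [Finset.mem_filter]
        obtain ⟨w', hw', hwe'⟩ := cycle_transfer hw
          (fun e' he' => by
            have he'B : e' ∈ insert e B := mem_of_walk_edge he'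
            have he'ne : e' ≠ e := by
              intro h; exact hbridge w hw (h ▸ he')
            rcases Finset.mem_insert.mp he'B with h | h
            · exact absurd h he'ne
            · exact h)
          (fun e' he' => by
            have : e' ∈ (A : Set (Sym2 V)) ∪ (B : Set (Sym2 V)) := Or.inr he'
            exact hdiag e' (by simpa using this))
        exact ⟨hxB', x0', w', hw', hwe' ▸ hew⟩
      exact Finset.card_le_card hsub
    omega

/-- Stage 2: from a max-degree-2 partition to two linear forests. -/
lemma stage2 : ∀ (n : ℕ) (A B : Finset (Sym2 V)), Disjoint A B →
    (∀ e ∈ A ∪ B, ¬ e.IsDiag) → (∀ v, cnt (A ∪ B) v ≤ 3) →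
    (∀ v, cnt A v ≤ 2) → (∀ v, cnt B v ≤ 2) → phi A + phi B = n →
    ∃ A' B' : Finset (Sym2 V), Disjoint A' B' ∧ A' ∪ B' = A ∪ B ∧
      (∀ v, cnt A' v ≤ 2) ∧ (∀ v, cnt B' v ≤ 2) ∧
      (grph A').IsAcyclic ∧ (grph B').IsAcyclic := by
  intro n
  induction n using Nat.strong_induction_on with
  | _ n ih =>
    intro A B hd hdiag h3 hA hB hn
    by_cases hacA : (grph A).IsAcyclic
    · by_cases hacB : (grph B).IsAcyclic
      · exact ⟨A, B, hd, rfl, hA, hB, hacA, hacB⟩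
      · obtain ⟨B', A', hd', hu', hB', hA', hlt⟩ :=
          stage2_step hd.symm (by rw [Finset.union_comm]; exact hdiag)
            (fun v => by rw [Finset.union_comm]; exact h3 v) hB hA hacB
        have hu'' : A' ∪ B' = A ∪ B := by rw [Finset.union_comm, hu', Finset.union_comm]
        obtain ⟨A'', B'', h1, h2, h3', h4, h5, h6⟩ :=
          ih (phi A' + phi B') (by omega) A' B' hd'.symm
            (by rw [hu'']; exact hdiag) (fun v => by rw [hu'']; exact h3 v) hA' hB' rfl
        exact ⟨A'', B'', h1, by rw [h2, hu''], h3', h4, h5, h6⟩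
    · obtain ⟨A', B', hd', hu', hA', hB', hlt⟩ := stage2_step hd hdiag h3 hA hB hacA
      obtain ⟨A'', B'', h1, h2, h3', h4, h5, h6⟩ :=
        ih (phi A' + phi B') (by omega) A' B' hd'
          (by rw [hu']; exact hdiag) (fun v => by rw [hu']; exact h3 v) hA' hB' rfl
      exact ⟨A'', B'', h1, by rw [h2, hu'], h3', h4, h5, h6⟩
lemma mem_support_of_mem_edge {H : SimpleGraph V} {x y v : V} {w : H.Walk x y}
    {e : Sym2 V} (he : e ∈ w.edges) (hv : v ∈ e) : v ∈ w.support := by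
  obtain ⟨a, b⟩ := e
  rw [Sym2.mem_iff] at hv
  rcases hv with rfl | rfl
  · exact w.fst_mem_support_of_mem_edges he
  · exact w.snd_mem_support_of_mem_edges he

/-- Alternately distribute the edges of a walk into two sets. -/
def addAlt {H : SimpleGraph V} : {u t : V} → H.Walk u t → Finset (Sym2 V) × Finset (Sym2 V)
  | _, _, SimpleGraph.Walk.nil => (∅, ∅)
  | _, _, @SimpleGraph.Walk.cons _ _ a b _ _ p => (insert s(a, b) (addAlt p).2, (addAlt p).1)

lemma addAlt_path_spec {H : SimpleGraph V} : ∀ {u t : V} (p : H.Walk u t), p.IsPath →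
    ((addAlt p).1 ∪ (addAlt p).2 = p.edges.toFinset) ∧
    Disjoint (addAlt p).1 (addAlt p).2 ∧
    (∀ v, cnt (addAlt p).1 v ≤ 1 ∧ cnt (addAlt p).2 v ≤ 1) ∧
    cnt (addAlt p).2 u = 0 := by
  intro u t p
  induction p with
  | nil =>
    intro _
    refine ⟨by simp [addAlt], by simp [addAlt], fun v => ⟨?_, ?_⟩, ?_⟩ <;>
      simp [addAlt, cnt]
  | @cons a b c h p ih =>
    intro hp
    rw [SimpleGraph.Walk.cons_isPath_iff] at hp
    obtain ⟨hunion, hdisj, hcnt, hstart⟩ := ih hp.1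
    have hshow : addAlt (SimpleGraph.Walk.cons h p)
        = (insert s(a, b) (addAlt p).2, (addAlt p).1) := rfl
    have hane : ∀ e ∈ (addAlt p).1 ∪ (addAlt p).2, a ∉ e := by
      intro e he hae
      rw [hunion, List.mem_toFinset] at he
      exact hp.2 (mem_support_of_mem_edge he hae)
    have he0P2 : s(a, b) ∉ (addAlt p).2 := by
      intro hmem
      exact hane _ (Finset.mem_union_right _ hmem) (Sym2.mem_mk_left _ _)
    have he0P1 : s(a, b) ∉ (addAlt p).1 := by
      intro hmem
      exact hane _ (Finset.mem_union_left _ hmem) (Sym2.mem_mk_left _ _)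
    rw [hshow]
    refine ⟨?_, ?_, ?_, ?_⟩
    · simp only [SimpleGraph.Walk.edges_cons, List.toFinset_cons]
      rw [Finset.insert_union, Finset.union_comm, hunion]
    · rw [Finset.disjoint_insert_left]
      exact ⟨he0P1, hdisj.symm⟩
    · intro v
      constructor
      · rw [cnt_insert he0P2]
        split
        · next hv =>
          rw [Sym2.mem_iff] at hv
          rcases hv with rfl | rfl
          · have : cnt (addAlt p).2 v = 0 :=
              cnt_eq_zero_of_no_incident (fun e he => hane e (Finset.mem_union_right _ he))
            omega
          · rw [hstart]
        · have := (hcnt v).2; omega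
      · exact (hcnt v).1
    · exact cnt_eq_zero_of_no_incident (fun e he => hane e (Finset.mem_union_left _ he))

lemma addAlt_cycle_spec {H : SimpleGraph V} {v0 : V} (c : H.Walk v0 v0) (hc : c.IsCycle) :
    ((addAlt c).1 ∪ (addAlt c).2 = c.edges.toFinset) ∧
    Disjoint (addAlt c).1 (addAlt c).2 ∧
    (∀ v, cnt (addAlt c).2 v ≤ 1) ∧
    (∀ v, v ≠ v0 → cnt (addAlt c).1 v ≤ 1) ∧
    cnt (addAlt c).1 v0 ≤ 2 := by
  obtain ⟨b, hadj, p, rfl⟩ := SimpleGraph.Walk.not_nil_iff.mp hc.not_nil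
  rw [SimpleGraph.Walk.cons_isCycle_iff] at hc
  obtain ⟨hpath, hemem⟩ := hc
  obtain ⟨hunion, hdisj, hcnt, hstart⟩ := addAlt_path_spec p hpath
  have hshow : addAlt (SimpleGraph.Walk.cons hadj p)
      = (insert s(v0, b) (addAlt p).2, (addAlt p).1) := rfl
  have he0P2 : s(v0, b) ∉ (addAlt p).2 := by
    intro hmem
    apply hemem
    have : s(v0, b) ∈ (addAlt p).1 ∪ (addAlt p).2 := Finset.mem_union_right _ hmem
    rw [hunion, List.mem_toFinset] at this
    exact this
  have he0P1 : s(v0, b) ∉ (addAlt p).1 := by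
    intro hmem
    apply hemem
    have : s(v0, b) ∈ (addAlt p).1 ∪ (addAlt p).2 := Finset.mem_union_left _ hmem
    rw [hunion, List.mem_toFinset] at this
    exact this
  rw [hshow]
  refine ⟨?_, ?_, fun v => (hcnt v).1, ?_, ?_⟩
  · simp only [SimpleGraph.Walk.edges_cons, List.toFinset_cons]
    rw [Finset.insert_union, Finset.union_comm, hunion]
  · rw [Finset.disjoint_insert_left]
    exact ⟨he0P1, hdisj.symm⟩
  · intro v hv
    rw [cnt_insert he0P2]
    split
    · next hvmem =>
      rw [Sym2.mem_iff] at hvmem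
      rcases hvmem with rfl | rfl
      · exact absurd rfl hv
      · rw [hstart]
    · have := (hcnt v).2; omega
  · rw [cnt_insert he0P2]
    have := (hcnt v0).2
    split <;> omega
/-- If every endpoint of every edge has incidence count at least 3, and there is an
edge, then the spanned graph contains a cycle. -/
lemma exists_cycle_of_min_deg [Fintype V] {E : Finset (Sym2 V)}
    (hdiag : ∀ e ∈ E, ¬ e.IsDiag) (hmin : ∀ e ∈ E, ∀ v ∈ e, 3 ≤ cnt E v)
    (hne : E.Nonempty) : ∃ (v0 : V) (c : (grph E).Walk v0 v0), c.IsCycle := by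
  suffices h : ∀ (a b : V), s(a, b) ∈ E → ∃ (v0 : V) (c : (grph E).Walk v0 v0), c.IsCycle by
    obtain ⟨e, he⟩ := hne
    induction e using Sym2.ind with
    | _ a b => exact h a b he
  intro a0 b0 he0
  have hab0 : a0 ≠ b0 := by
    intro h
    exact hdiag _ he0 (by rw [h]; exact Sym2.mk_isDiag_iff.mpr rfl)
  set L : Set ℕ := {n | ∃ (x y : V) (p : (grph E).Walk x y), p.IsPath ∧ p.length = n} with hL
  have hbdd : BddAbove L := by
    refine ⟨Fintype.card V, ?_⟩
    rintro n ⟨x, y, p, hp, rfl⟩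
    have h1 : p.support.length ≤ Fintype.card V := hp.support_nodup.length_le_card
    have h2 := p.length_support
    omega
  have h1L : (1 : ℕ) ∈ L := by
    refine ⟨a0, b0, SimpleGraph.Walk.cons (grph_adj.mpr ⟨he0, hab0⟩) SimpleGraph.Walk.nil,
      ?_, by simp⟩
    rw [SimpleGraph.Walk.cons_isPath_iff]
    exact ⟨SimpleGraph.Walk.IsPath.nil, by simp [hab0]⟩
  have hmem := Nat.sSup_mem ⟨1, h1L⟩ hbdd
  obtain ⟨x, y, p, hp, hplen⟩ := hmem
  have hmax : ∀ m ∈ L, m ≤ sSup L := fun m hm => le_csSup hbdd hm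
  have h1n : 1 ≤ sSup L := hmax 1 h1L
  have hpnil : ¬ p.Nil := by
    rw [SimpleGraph.Walk.nil_iff_length_eq]
    omega
  obtain ⟨w1, hxw1, q, hpq⟩ := SimpleGraph.Walk.not_nil_iff.mp hpnil
  have hfirst : s(x, w1) ∈ p.edges := by rw [hpq]; simp
  have hfE : s(x, w1) ∈ E := (grph_adj.mp hxw1).1
  have hx3 : 3 ≤ cnt E x := hmin _ hfE x (Sym2.mem_mk_left _ _)
  have hlt : 1 < (E.filter (fun e => x ∈ e)).card := by
    have : cnt E x = (E.filter (fun e => x ∈ e)).card := rfl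
    omega
  obtain ⟨e', he'f, he'ne⟩ := Finset.exists_mem_ne hlt s(x, w1)
  have he'E : e' ∈ E := (Finset.mem_filter.mp he'f).1
  have hxe' : x ∈ e' := (Finset.mem_filter.mp he'f).2
  obtain ⟨w, hespec⟩ : ∃ w, s(x, w) = e' := ⟨_, Sym2.other_spec' hxe'⟩
  have hwx : x ≠ w := by
    intro h
    apply hdiag e' he'E
    rw [← hespec, ← h]
    exact Sym2.mk_isDiag_iff.mpr rfl
  have hww1 : w ≠ w1 := by
    intro h
    apply he'ne
    rw [← hespec, h]
  have hadjxw : (grph E).Adj x w := grph_adj.mpr ⟨by rw [hespec]; exact he'E, hwx⟩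
  by_cases hwsup : w ∈ p.support
  · -- close a cycle
    have ht : (p.takeUntil w hwsup).IsPath := hp.takeUntil hwsup
    refine ⟨w, SimpleGraph.Walk.cons hadjxw.symm (p.takeUntil w hwsup), ?_⟩
    rw [SimpleGraph.Walk.cons_isCycle_iff]
    refine ⟨ht, ?_⟩
    intro hmem
    have hmem' : s(w, x) ∈ p.edges := SimpleGraph.Walk.edges_takeUntil_subset p hwsup hmem
    have := start_edge_unique hp _ hmem' _ hfirst (Sym2.mem_mk_right _ _) (Sym2.mem_mk_left _ _)
    rw [Sym2.eq_swap] at this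
    exact hww1 (Sym2.congr_right.mp this)
  · -- extend the path : contradiction with maximality
    exfalso
    have hnewpath : (SimpleGraph.Walk.cons hadjxw.symm p).IsPath := by
      rw [SimpleGraph.Walk.cons_isPath_iff]
      exact ⟨hp, hwsup⟩
    have : (sSup L) + 1 ∈ L := ⟨w, y, _, hnewpath, by
      rw [SimpleGraph.Walk.length_cons, hplen]⟩
    have := hmax _ this
    omega

/-- Stage 1 : partition into two parts of max incidence count 2. -/
lemma stage1 [Fintype V] : ∀ (n : ℕ) (E : Finset (Sym2 V)), E.card = n →
    (∀ e ∈ E, ¬ e.IsDiag) → (∀ v, cnt E v ≤ 3) →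
    ∃ A B : Finset (Sym2 V), Disjoint A B ∧ A ∪ B = E ∧
      (∀ v, cnt A v ≤ 2) ∧ (∀ v, cnt B v ≤ 2) := by
  intro n
  induction n using Nat.strong_induction_on with
  | _ n ih =>
    intro E hcard hdiag h3
    by_cases hE : E = ∅
    · exact ⟨∅, ∅, by simp, by simp [hE], fun v => by simp [cnt], fun v => by simp [cnt]⟩
    by_cases hlow : ∃ e ∈ E, ∃ v ∈ e, cnt E v ≤ 2
    · obtain ⟨e, heE, u, hue, hcu⟩ := hlow
      set E' := E.erase e with hE'
      have hcard' : E'.card < n := by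
        rw [← hcard]
        exact Finset.card_erase_lt_of_mem heE
      obtain ⟨A, B, hd, hu, hA, hB⟩ := ih E'.card hcard' E' rfl
        (fun e' he' => hdiag e' (Finset.erase_subset _ _ he'))
        (fun v => le_trans (cnt_le_of_subset (Finset.erase_subset _ _) v) (h3 v))
      have hsum : ∀ x, cnt A x + cnt B x = cnt E' x := by
        intro x
        rw [← cnt_union_of_disjoint hd, hu]
      obtain ⟨w, hespec⟩ : ∃ w, s(u, w) = e := ⟨_, Sym2.other_spec' hue⟩
      have hwe : w ∈ e := by rw [← hespec]; exact Sym2.mem_mk_right _ _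
      have hcu' : cnt E' u ≤ 1 := by
        have h' := cnt_erase_add_one_le heE hue
        rw [← hE'] at h'
        omega
      have hcw' : cnt E' w ≤ 2 := by
        have h' := cnt_erase_add_one_le heE hwe
        rw [← hE'] at h'
        have := h3 w
        omega
      have heE' : e ∉ E' := Finset.notMem_erase _ _
      have heA : e ∉ A := fun h => heE' (hu ▸ Finset.mem_union_left _ h)
      have heB : e ∉ B := fun h => heE' (hu ▸ Finset.mem_union_right _ h)
      have hmemcase : ∀ x : V, x ∈ e → x = u ∨ x = w := by
        intro x hx
        rw [← hespec, Sym2.mem_iff] at hx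
        exact hx
      by_cases hAw : cnt A w ≤ 1
      · refine ⟨insert e A, B, ?_, ?_, ?_, hB⟩
        · rw [Finset.disjoint_insert_left]
          exact ⟨heB, hd⟩
        · rw [Finset.insert_union, hu, hE', Finset.insert_erase heE]
        · intro x
          rw [cnt_insert heA]
          split
          · next hx =>
            rcases hmemcase x hx with rfl | rfl
            · have := hsum x; omega
            · omega
          · have := hA x; omega
      · have hBw : cnt B w = 0 := by
          have := hsum w; omega
        refine ⟨A, insert e B, ?_, ?_, hA, ?_⟩
        · rw [Finset.disjoint_insert_right]
          exact ⟨heA, hd⟩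
        · rw [Finset.union_insert, hu, hE', Finset.insert_erase heE]
        · intro x
          rw [cnt_insert heB]
          split
          · next hx =>
            rcases hmemcase x hx with rfl | rfl
            · have := hsum x; omega
            · omega
          · have := hB x; omega
    · -- minimum degree 3 case : remove a cycle
      push_neg at hlow
      obtain ⟨v0, c, hc⟩ := exists_cycle_of_min_deg hdiag hlow
        (Finset.nonempty_of_ne_empty hE)
      set T : Finset (Sym2 V) := c.edges.toFinset with hT
      have hTE : T ⊆ E := by
        intro e he
        rw [hT, List.mem_toFinset] at he
        exact mem_of_walk_edge he
      have hTne : T.Nonempty := by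
        have hlen := hc.three_le_length
        have : c.edges ≠ [] := by
          intro h0
          have := c.length_edges
          rw [h0] at this
          simp at this
          omega
        obtain ⟨e, he⟩ := List.exists_mem_of_ne_nil _ this
        exact ⟨e, List.mem_toFinset.mpr he⟩
      set E' := E \ T with hE'
      have hcard' : E'.card < n := by
        rw [← hcard]
        apply Finset.card_lt_card
        rw [Finset.ssubset_iff_of_subset (Finset.sdiff_subset)]
        obtain ⟨e, he⟩ := hTne
        exact ⟨e, hTE he, by simp [hE', he]⟩
      obtain ⟨A, B, hd, hu, hA, hB⟩ := ih E'.card hcard' E' rfl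
        (fun e' he' => hdiag e' (Finset.sdiff_subset he'))
        (fun v => le_trans (cnt_le_of_subset (Finset.sdiff_subset) v) (h3 v))
      have hsum : ∀ x, cnt A x + cnt B x = cnt E' x := by
        intro x
        rw [← cnt_union_of_disjoint hd, hu]
      -- support vertices have low count in E'
      have hsupcnt : ∀ x ∈ c.support, cnt E' x ≤ 1 := by
        intro x hx
        obtain ⟨e1, e2, hne12, he1, he2, hv1, hv2⟩ := cycle_two_edges hc hx
        have he1E : e1 ∈ E := hTE (List.mem_toFinset.mpr he1)
        have he2E : e2 ∈ E := hTE (List.mem_toFinset.mpr he2)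
        have hsub : E'.filter (fun e => x ∈ e) ⊆
            ((E.filter (fun e => x ∈ e)).erase e1).erase e2 := by
          intro z hz
          rw [Finset.mem_filter, hE', Finset.mem_sdiff] at hz
          rw [Finset.mem_erase, Finset.mem_erase, Finset.mem_filter]
          refine ⟨?_, ?_, hz.1.1, hz.2⟩
          · intro hzz; rw [hzz] at hz; exact hz.1.2 (List.mem_toFinset.mpr he2)
          · intro hzz; rw [hzz] at hz; exact hz.1.2 (List.mem_toFinset.mpr he1)
        have hcle := Finset.card_le_card hsub
        have he1f : e1 ∈ E.filter (fun e => x ∈ e) := Finset.mem_filter.mpr ⟨he1E, hv1⟩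
        have he2f : e2 ∈ (E.filter (fun e => x ∈ e)).erase e1 :=
          Finset.mem_erase.mpr ⟨Ne.symm hne12, Finset.mem_filter.mpr ⟨he2E, hv2⟩⟩
        rw [Finset.card_erase_of_mem he2f, Finset.card_erase_of_mem he1f] at hcle
        have hE3 := h3 x
        have h1 : 1 ≤ (E.filter (fun e => x ∈ e)).card := Finset.card_pos.mpr ⟨e1, he1f⟩
        have h2 : 2 ≤ (E.filter (fun e => x ∈ e)).card := by
          have := two_le_cnt_of_two_edges he1E he2E hv1 hv2 hne12
          exact this
        unfold cnt at hE3 ⊢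
        omega
      obtain ⟨hXu, hXd, hX2, hX1, hX1v0⟩ := addAlt_cycle_spec c hc
      set X1 := (addAlt c).1 with hX1def
      set X2 := (addAlt c).2 with hX2def
      have hX1T : X1 ⊆ T := by
        intro z hz; rw [hT, ← hXu]; exact Finset.mem_union_left _ hz
      have hX2T : X2 ⊆ T := by
        intro z hz; rw [hT, ← hXu]; exact Finset.mem_union_right _ hz
      have hE'T : Disjoint E' T := Finset.sdiff_disjoint
      have hXsupp : ∀ (X : Finset (Sym2 V)), X ⊆ T → ∀ x, x ∉ c.support → cnt X x = 0 := by
        intro X hXT x hx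
        apply cnt_eq_zero_of_no_incident
        intro e he hxe
        exact hx (mem_support_of_mem_edge (List.mem_toFinset.mp (hXT he)) hxe)
      have hv0sup : v0 ∈ c.support := c.start_mem_support
      -- main claim, applied symmetrically
      have claim : ∀ (A B : Finset (Sym2 V)), Disjoint A B → A ∪ B = E' →
          (∀ v, cnt A v ≤ 2) → (∀ v, cnt B v ≤ 2) → cnt A v0 = 0 →
          ∃ A' B' : Finset (Sym2 V), Disjoint A' B' ∧ A' ∪ B' = E ∧
            (∀ v, cnt A' v ≤ 2) ∧ (∀ v, cnt B' v ≤ 2) := by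
        intro A B hd hu hA hB hA0
        have hsum : ∀ x, cnt A x + cnt B x = cnt E' x := by
          intro x
          rw [← cnt_union_of_disjoint hd, hu]
        have hAE' : A ⊆ E' := hu ▸ Finset.subset_union_left
        have hBE' : B ⊆ E' := hu ▸ Finset.subset_union_right
        have hdAX1 : Disjoint A X1 :=
          Finset.disjoint_of_subset_left hAE' (Finset.disjoint_of_subset_right hX1T hE'T)
        have hdBX2 : Disjoint B X2 :=
          Finset.disjoint_of_subset_left hBE' (Finset.disjoint_of_subset_right hX2T hE'T)
        refine ⟨A ∪ X1, B ∪ X2, ?_, ?_, ?_, ?_⟩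
        · rw [Finset.disjoint_union_left, Finset.disjoint_union_right,
            Finset.disjoint_union_right]
          refine ⟨⟨hd, Finset.disjoint_of_subset_left hAE'
              (Finset.disjoint_of_subset_right hX2T hE'T)⟩,
            ⟨(Finset.disjoint_of_subset_left hBE'
              (Finset.disjoint_of_subset_right hX1T hE'T)).symm, ?_⟩⟩
          exact hXd
        · rw [Finset.union_union_union_comm, hu, hXu, ← hT, hE',
            Finset.sdiff_union_of_subset hTE]
        · intro x
          rw [cnt_union_of_disjoint hdAX1]
          by_cases hxs : x ∈ c.support
          · by_cases hxv0 : x = v0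
            · subst hxv0
              rw [hA0]
              omega
            · have := hsupcnt x hxs
              have := hsum x
              have := hX1 x hxv0
              omega
          · rw [hXsupp X1 hX1T x hxs]
            have := hA x
            omega
        · intro x
          rw [cnt_union_of_disjoint hdBX2]
          by_cases hxs : x ∈ c.support
          · have := hsupcnt x hxs
            have := hsum x
            have := hX2 x
            omega
          · rw [hXsupp X2 hX2T x hxs]
            have := hB x
            omega
      by_cases hA0 : cnt A v0 = 0
      · exact claim A B hd hu hA hB hA0
      · have hB0 : cnt B v0 = 0 := by
          have := hsum v0
          have := hsupcnt v0 hv0sup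
          omega
        obtain ⟨A', B', h1, h2, h3', h4⟩ := claim B A hd.symm (by rw [Finset.union_comm]; exact hu)
          hB hA hB0
        exact ⟨A', B', h1, h2, h3', h4⟩
end AuxLinearArboricity
/-- A set of edges is a linear forest if it spans an acyclic graph in which every
vertex has degree at most two. -/
def IsLinearForestSet {V : Type*} (L : Set (Sym2 V)) : Prop :=
  (SimpleGraph.fromEdgeSet L).IsAcyclic ∧ ∀ v : V, {e ∈ L | v ∈ e}.ncard ≤ 2

/-- Every finite simple graph of maximum degree at most `3` admits a partition of its
edge set into two linear forests. -/
theorem edgeSet_partition_two_linear_forests {V : Type*} [Fintype V] [DecidableEq V]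
    (G : SimpleGraph V) [DecidableRel G.Adj] (hdeg : ∀ v : V, G.degree v ≤ 3) :
    ∃ L₁ L₂ : Set (Sym2 V), Disjoint L₁ L₂ ∧ L₁ ∪ L₂ = G.edgeSet ∧
      IsLinearForestSet L₁ ∧ IsLinearForestSet L₂ := by
  set E : Finset (Sym2 V) := G.edgeFinset with hE
  have hdiag : ∀ e ∈ E, ¬ e.IsDiag := by
    intro e he
    exact G.not_isDiag_of_mem_edgeSet (SimpleGraph.mem_edgeFinset.mp he)
  have hcntdeg : ∀ v, cnt E v = G.degree v := by
    intro v
    rw [cnt, ← SimpleGraph.incidenceFinset_eq_filter, SimpleGraph.card_incidenceFinset_eq_degree]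
  have h3 : ∀ v, cnt E v ≤ 3 := fun v => (hcntdeg v) ▸ hdeg v
  obtain ⟨A, B, hd, hu, hA, hB⟩ := stage1 E.card E rfl hdiag h3
  obtain ⟨A', B', hd', hu', hA', hB', hacA, hacB⟩ := stage2 (phi A + phi B) A B hd
    (by rw [hu]; exact hdiag) (fun v => by rw [hu]; exact h3 v) hA hB rfl
  rw [hu] at hu'
  refine ⟨(↑A' : Set (Sym2 V)), (↑B' : Set (Sym2 V)), ?_, ?_, ⟨hacA, ?_⟩, ⟨hacB, ?_⟩⟩
  · exact Finset.disjoint_coe.mpr hd'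
  · rw [← Finset.coe_union, hu', hE, SimpleGraph.coe_edgeFinset]
  · intro v
    have hset : {e ∈ (↑A' : Set (Sym2 V)) | v ∈ e} = ↑(A'.filter (fun e => v ∈ e)) := by
      ext e
      simp [Finset.mem_filter]
    rw [hset, Set.ncard_coe_finset]
    exact hA' v
  · intro v
    have hset : {e ∈ (↑B' : Set (Sym2 V)) | v ∈ e} = ↑(B'.filter (fun e => v ∈ e)) := by
      ext e
      simp [Finset.mem_filter]
    rw [hset, Set.ncard_coe_finset]
    exact hB' v
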